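/- Let Γ be a finite abelian group and A = ℤ[Γ] its integral group ring, with the inner product ⟨x,y⟩ = ∑_σ σ(x)·conj(σ(y)) over all ring homomorphisms σ : A → ℂ. Then for x = ∑_γ x_γ·γ with x_γ ∈ ℤ one has ⟨x,x⟩ = #Γ · ∑_γ x_γ². Consequently, every nonzero x satisfies ⟨x,x⟩ ≥ #Γ with equality if and only if x ∈ ±Γ, and the group of roots of unity of ℤ[Γ] equals ±Γ (Higman's theorem). -/

import Mathlib

/-- The natural inner product on a (reduced) order:
`⟨x, y⟩ = ∑ σ, σ x * conj (σ y)`, where `σ` ranges over all ring homomorphisms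
`A → ℂ` (a finite set when `A` is a reduced order); the value is real. -/
noncomputable def ordPairing (A : Type*) [CommRing A] (x y : A) : ℝ :=
  ∑ᶠ σ : A →+* ℂ, (σ x * (starRingEnd ℂ) (σ y)).re

open Finset MonoidAlgebra

section Aux

variable {Γ : Type} [CommGroup Γ]

/-- Ring homs out of a ring are the same as `ℤ`-algebra homs. -/
def ringHomIntAlgEquiv (A B : Type*) [CommRing A] [CommRing B] :
    (A →+* B) ≃ (A →ₐ[ℤ] B) where
  toFun := RingHom.toIntAlgHom
  invFun := AlgHom.toRingHom
  left_inv _ := rfl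
  right_inv _ := rfl

/-- Monoid homs `Γ →* ℂ` are the same as additive characters of `Additive Γ`. -/
def mulAddCharEquiv : (Γ →* ℂ) ≃ AddChar (Additive Γ) ℂ where
  toFun f := { toFun := fun a => f a.toMul
               map_zero_eq_one' := f.map_one
               map_add_eq_mul' := fun a b => f.map_mul _ _ }
  invFun ψ := { toFun := fun g => ψ (Additive.ofMul g)
                map_one' := ψ.map_zero_eq_one
                map_mul' := fun a b => ψ.map_add_eq_mul _ _ }
  left_inv f := rfl
  right_inv ψ := rfl

/-- Ring homs `ℤ[Γ] →+* ℂ` are the same as additive characters of `Additive Γ`. -/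
noncomputable def ringHomCharEquiv (Γ : Type) [CommGroup Γ] :
    (MonoidAlgebra ℤ Γ →+* ℂ) ≃ AddChar (Additive Γ) ℂ :=
  (ringHomIntAlgEquiv _ _).trans <| ((MonoidAlgebra.lift ℤ ℂ Γ).symm.trans mulAddCharEquiv)

lemma ringHomCharEquiv_symm_single (ψ : AddChar (Additive Γ) ℂ) (γ : Γ) :
    (ringHomCharEquiv Γ).symm ψ (MonoidAlgebra.single γ (1 : ℤ)) = ψ (Additive.ofMul γ) := by
  show (MonoidAlgebra.lift ℤ ℂ Γ) (mulAddCharEquiv.symm ψ) (MonoidAlgebra.single γ (1 : ℤ))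
      = ψ (Additive.ofMul γ)
  rw [MonoidAlgebra.lift_single]
  simp [mulAddCharEquiv]

variable [Fintype Γ]

lemma ringHom_apply_eq_sum (σ : MonoidAlgebra ℤ Γ →+* ℂ) (x : MonoidAlgebra ℤ Γ) :
    σ x = ∑ γ : Γ, (x.coeff γ : ℂ) * σ (MonoidAlgebra.single γ (1 : ℤ)) := by
  classical
  have hx : x = ∑ γ : Γ, MonoidAlgebra.single γ (x.coeff γ) := by
    ext δ
    rw [MonoidAlgebra.coeff_sum, Finsupp.finset_sum_apply]
    simp [MonoidAlgebra.coeff_single, Finsupp.single_apply]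
  conv_lhs => rw [hx]
  rw [map_sum]
  refine Finset.sum_congr rfl fun γ _ => ?_
  have h1 : MonoidAlgebra.single γ (x.coeff γ) = (x.coeff γ) • MonoidAlgebra.single γ (1 : ℤ) := by
    rw [MonoidAlgebra.smul_single, smul_eq_mul, mul_one]
  rw [h1, map_zsmul, zsmul_eq_mul]

open scoped Classical in
lemma sum_addChar_apply (a : Additive Γ) :
    ∑ ψ : AddChar (Additive Γ) ℂ, ψ a
      = if a = 0 then (Fintype.card Γ : ℂ) else 0 := by
  classical
  split_ifs with h
  · subst h
    simp only [AddChar.map_zero_eq_one, Finset.sum_const, nsmul_eq_mul, mul_one]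
    rw [Finset.card_univ, AddChar.card_eq, Fintype.card_congr (Additive.ofMul (α := Γ)).symm]
  · obtain ⟨χ, hχ⟩ := AddChar.exists_apply_ne_zero.2 h
    have hre : ∑ ψ : AddChar (Additive Γ) ℂ, (χ * ψ) a
        = ∑ ψ : AddChar (Additive Γ) ℂ, ψ a :=
      Fintype.sum_equiv (Equiv.mulLeft χ) _ _ fun ψ => rfl
    have : (χ a - 1) * ∑ ψ : AddChar (Additive Γ) ℂ, ψ a = 0 := by
      have := hre
      simp only [AddChar.mul_apply, ← Finset.mul_sum] at this
      linear_combination this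
    rcases mul_eq_zero.1 this with h' | h'
    · exact absurd (by linear_combination h') hχ
    · exact h'

open scoped Classical in
lemma key_complex_sum (a : Γ → ℂ) (ha : ∀ γ, (starRingEnd ℂ) (a γ) = a γ) :
    ∑ ψ : AddChar (Additive Γ) ℂ,
        (∑ γ : Γ, a γ * ψ (Additive.ofMul γ)) *
          (starRingEnd ℂ) (∑ δ : Γ, a δ * ψ (Additive.ofMul δ))
      = (Fintype.card Γ : ℂ) * ∑ γ : Γ, a γ ^ 2 := by
  classical
  have step : ∀ ψ : AddChar (Additive Γ) ℂ,
      (∑ γ : Γ, a γ * ψ (Additive.ofMul γ)) *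
        (starRingEnd ℂ) (∑ δ : Γ, a δ * ψ (Additive.ofMul δ))
      = ∑ γ : Γ, ∑ δ : Γ, a γ * a δ * ψ (Additive.ofMul γ - Additive.ofMul δ) := by
    intro ψ
    rw [map_sum, Finset.sum_mul_sum]
    refine Finset.sum_congr rfl fun γ _ => Finset.sum_congr rfl fun δ _ => ?_
    rw [map_mul, ha δ, ← AddChar.map_neg_eq_conj]
    rw [sub_eq_add_neg, AddChar.map_add_eq_mul]
    ring
  simp_rw [step]
  rw [Finset.sum_comm]
  have swap2 : ∀ γ : Γ, ∑ ψ : AddChar (Additive Γ) ℂ, ∑ δ : Γ,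
      a γ * a δ * ψ (Additive.ofMul γ - Additive.ofMul δ)
      = ∑ δ : Γ, a γ * a δ *
          ∑ ψ : AddChar (Additive Γ) ℂ, ψ (Additive.ofMul γ - Additive.ofMul δ) := by
    intro γ
    rw [Finset.sum_comm]
    exact Finset.sum_congr rfl fun δ _ => by rw [Finset.mul_sum]
  simp_rw [swap2, sum_addChar_apply, sub_eq_zero]
  have : ∀ γ : Γ, ∑ δ : Γ, a γ * a δ *
      (if Additive.ofMul γ = Additive.ofMul δ then (Fintype.card Γ : ℂ) else 0)
      = (Fintype.card Γ : ℂ) * a γ ^ 2 := by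
    intro γ
    rw [Finset.sum_eq_single γ]
    · rw [if_pos rfl]; ring
    · intro δ _ hδ
      rw [if_neg (fun h => hδ ((Additive.ofMul.injective h).symm)), mul_zero]
    · simp
  simp_rw [this, ← Finset.mul_sum]

lemma pairing_formula (x : MonoidAlgebra ℤ Γ) :
    ordPairing (MonoidAlgebra ℤ Γ) x x
      = (Fintype.card Γ : ℝ) * ∑ γ : Γ, ((x.coeff γ : ℤ) : ℝ) ^ 2 := by
  classical
  letI : Fintype (MonoidAlgebra ℤ Γ →+* ℂ) := Fintype.ofEquiv _ (ringHomCharEquiv Γ).symm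
  rw [ordPairing, finsum_eq_sum_of_fintype,
    ← Equiv.sum_comp (ringHomCharEquiv Γ).symm
      (fun σ : MonoidAlgebra ℤ Γ →+* ℂ => (σ x * (starRingEnd ℂ) (σ x)).re)]
  have key : ∀ ψ : AddChar (Additive Γ) ℂ,
      ((ringHomCharEquiv Γ).symm ψ) x = ∑ γ : Γ, (x.coeff γ : ℂ) * ψ (Additive.ofMul γ) := by
    intro ψ
    rw [ringHom_apply_eq_sum]
    exact Finset.sum_congr rfl fun γ _ => by rw [ringHomCharEquiv_symm_single]
  simp only [key]
  rw [← Complex.re_sum,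
    key_complex_sum (fun γ => ((x.coeff γ : ℤ) : ℂ)) (fun γ => by simp)]
  have : ((Fintype.card Γ : ℂ)) * ∑ γ : Γ, ((x.coeff γ : ℤ) : ℂ) ^ 2
      = (((Fintype.card Γ : ℝ) * ∑ γ : Γ, ((x.coeff γ : ℤ) : ℝ) ^ 2 : ℝ) : ℂ) := by
    push_cast
    ring
  rw [this, Complex.ofReal_re]

end Aux

/-- Higman's theorem for `ℤ[Γ]`, `Γ` finite abelian: the norm formula
`⟨x,x⟩ = #Γ · ∑ x_γ²`, the resulting lower bound `⟨x,x⟩ ≥ #Γ` for `x ≠ 0` with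
equality iff `x ∈ ±Γ`, and the conclusion that the roots of unity of `ℤ[Γ]`
are exactly `±Γ`. -/
theorem higman_groupRing {Γ : Type} [CommGroup Γ] [Fintype Γ] :
    (∀ x : MonoidAlgebra ℤ Γ,
      ordPairing (MonoidAlgebra ℤ Γ) x x
        = (Fintype.card Γ : ℝ) * ∑ γ : Γ, ((x.coeff γ : ℤ) : ℝ) ^ 2) ∧
    (∀ x : MonoidAlgebra ℤ Γ, x ≠ 0 →
      ((Fintype.card Γ : ℝ) ≤ ordPairing (MonoidAlgebra ℤ Γ) x x ∧
        (ordPairing (MonoidAlgebra ℤ Γ) x x = (Fintype.card Γ : ℝ) ↔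
          ∃ γ : Γ, x = MonoidAlgebra.single γ (1 : ℤ) ∨
            x = MonoidAlgebra.single γ (-1 : ℤ)))) ∧
    (∀ x : MonoidAlgebra ℤ Γ, (∃ n : ℕ, 0 < n ∧ x ^ n = 1) ↔
      ∃ γ : Γ, x = MonoidAlgebra.single γ (1 : ℤ) ∨
        x = MonoidAlgebra.single γ (-1 : ℤ)) := by
  classical
  have cardpos : 0 < Fintype.card Γ := Fintype.card_pos
  -- integer-valued version of the sum of squares
  have hsum : ∀ x : MonoidAlgebra ℤ Γ,
      ∑ γ : Γ, ((x.coeff γ : ℤ) : ℝ) ^ 2 = ((∑ γ : Γ, (x.coeff γ) ^ 2 : ℤ) : ℝ) := by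
    intro x; push_cast; ring
  -- sum of squares = 1 iff x is ± a group element
  have hN1 : ∀ x : MonoidAlgebra ℤ Γ, x ≠ 0 →
      ((∑ γ : Γ, (x.coeff γ) ^ 2 = 1) ↔
        ∃ γ : Γ, x = MonoidAlgebra.single γ (1 : ℤ) ∨
          x = MonoidAlgebra.single γ (-1 : ℤ)) := by
    intro x hx
    constructor
    · intro hN
      obtain ⟨γ₀, hγ₀⟩ : ∃ γ₀, x.coeff γ₀ ≠ 0 := by
        by_contra h
        push_neg at h
        exact hx (MonoidAlgebra.ext (Finsupp.ext h))
      have hsplit : (x.coeff γ₀) ^ 2 + ∑ δ ∈ Finset.univ.erase γ₀, (x.coeff δ) ^ 2 = 1 := by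
        rw [Finset.add_sum_erase Finset.univ (fun δ => (x.coeff δ) ^ 2) (Finset.mem_univ γ₀)]
        exact hN
      have h1 : 1 ≤ (x.coeff γ₀) ^ 2 := by
        have := hγ₀
        nlinarith [sq_nonneg (x.coeff γ₀), Int.one_le_abs this, sq_abs (x.coeff γ₀)]
      have hrest0 : ∑ δ ∈ Finset.univ.erase γ₀, (x.coeff δ) ^ 2 = 0 := by
        have hge : (0 : ℤ) ≤ ∑ δ ∈ Finset.univ.erase γ₀, (x.coeff δ) ^ 2 :=
          Finset.sum_nonneg fun δ _ => sq_nonneg _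
        omega
      have hzero : ∀ δ, δ ≠ γ₀ → x.coeff δ = 0 := by
        intro δ hδ
        have := (Finset.sum_eq_zero_iff_of_nonneg
          (fun δ _ => sq_nonneg (x.coeff δ))).1 hrest0 δ (by simp [hδ])
        exact pow_eq_zero_iff (by norm_num) |>.1 this
      have hsq1 : (x.coeff γ₀) ^ 2 = 1 := by omega
      have hval : x.coeff γ₀ = 1 ∨ x.coeff γ₀ = -1 :=
        Int.isUnit_iff.1 (IsUnit.of_mul_eq_one _ (by rw [← sq]; exact hsq1))
      refine ⟨γ₀, ?_⟩
      have hxeq : ∀ c : ℤ, x.coeff γ₀ = c → x = MonoidAlgebra.single γ₀ c := by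
        intro c hc
        ext δ
        rw [MonoidAlgebra.coeff_single, Finsupp.single_apply]
        by_cases h : δ = γ₀
        · subst h; simp [hc]
        · rw [hzero δ h, if_neg (Ne.symm h)]
      rcases hval with h | h
      · exact Or.inl (hxeq 1 h)
      · exact Or.inr (hxeq (-1) h)
    · rintro ⟨γ, h | h⟩ <;> subst h <;>
      · rw [Finset.sum_eq_single γ]
        · simp [MonoidAlgebra.coeff_single, Finsupp.single_apply]
        · intro δ _ hδ; simp [MonoidAlgebra.coeff_single, Finsupp.single_apply, Ne.symm hδ]
        · simp
  -- lower bound on sum of squares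
  have hNge : ∀ x : MonoidAlgebra ℤ Γ, x ≠ 0 → 1 ≤ ∑ γ : Γ, (x.coeff γ) ^ 2 := by
    intro x hx
    obtain ⟨γ₀, hγ₀⟩ : ∃ γ₀, x.coeff γ₀ ≠ 0 := by
      by_contra h; push_neg at h; exact hx (MonoidAlgebra.ext (Finsupp.ext h))
    have h1 : 1 ≤ (x.coeff γ₀) ^ 2 := by
      nlinarith [Int.one_le_abs hγ₀, sq_abs (x.coeff γ₀)]
    calc (1 : ℤ) ≤ (x.coeff γ₀) ^ 2 := h1
      _ ≤ ∑ γ : Γ, (x.coeff γ) ^ 2 :=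
        Finset.single_le_sum (fun γ _ => sq_nonneg (x.coeff γ)) (Finset.mem_univ γ₀)
  have part2 : ∀ x : MonoidAlgebra ℤ Γ, x ≠ 0 →
      ((Fintype.card Γ : ℝ) ≤ ordPairing (MonoidAlgebra ℤ Γ) x x ∧
        (ordPairing (MonoidAlgebra ℤ Γ) x x = (Fintype.card Γ : ℝ) ↔
          ∃ γ : Γ, x = MonoidAlgebra.single γ (1 : ℤ) ∨
            x = MonoidAlgebra.single γ (-1 : ℤ))) := by
    intro x hx
    have hf := pairing_formula x
    have hN := hNge x hx
    constructor
    · rw [hf, hsum]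
      have h1 : (1 : ℝ) ≤ ((∑ γ : Γ, (x.coeff γ) ^ 2 : ℤ) : ℝ) := by exact_mod_cast hN
      have h2 : (0 : ℝ) < (Fintype.card Γ : ℝ) := by exact_mod_cast cardpos
      nlinarith
    · rw [hf, hsum, ← hN1 x hx]
      constructor
      · intro h
        have hc : (Fintype.card Γ : ℝ) ≠ 0 := by
          exact_mod_cast cardpos.ne'
        have h2 : ((∑ γ : Γ, (x.coeff γ) ^ 2 : ℤ) : ℝ) = 1 :=
          mul_left_cancel₀ hc (by rw [h, mul_one])
        exact_mod_cast h2
      · intro h; rw [h]; norm_num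
  refine ⟨pairing_formula, part2, ?_⟩
  · intro x
    constructor
    · rintro ⟨n, hn, hxn⟩
      have hx : x ≠ 0 := by
        rintro rfl
        rw [zero_pow hn.ne'] at hxn
        exact one_ne_zero hxn.symm
      -- each σ x has norm 1
      letI : Fintype (MonoidAlgebra ℤ Γ →+* ℂ) := Fintype.ofEquiv _ (ringHomCharEquiv Γ).symm
      have hnorm : ∀ σ : MonoidAlgebra ℤ Γ →+* ℂ, σ x * (starRingEnd ℂ) (σ x) = 1 := by
        intro σ
        have h1 : (σ x) ^ n = 1 := by rw [← map_pow, hxn, map_one]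
        have h2 : ‖σ x‖ ^ n = 1 := by rw [← norm_pow, h1, norm_one]
        have h3 : ‖σ x‖ = 1 := by
          refine (pow_left_strictMonoOn₀ hn.ne').injOn (Set.mem_Ici.2 (norm_nonneg _))
            (Set.mem_Ici.2 zero_le_one) ?_
          rw [h2, one_pow]
        rw [Complex.mul_conj, Complex.normSq_eq_norm_sq, h3]
        norm_num
      have hcard : Fintype.card (MonoidAlgebra ℤ Γ →+* ℂ) = Fintype.card Γ := by
        rw [Fintype.card_congr (ringHomCharEquiv Γ), AddChar.card_eq]
        exact Fintype.card_congr (Additive.ofMul (α := Γ)).symm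
      have hpair : ordPairing (MonoidAlgebra ℤ Γ) x x = (Fintype.card Γ : ℝ) := by
        rw [ordPairing, finsum_eq_sum_of_fintype]
        simp_rw [fun σ => congrArg Complex.re (hnorm σ)]
        simp [hcard]
      exact (part2 x hx).2.mp hpair
    · rintro ⟨γ, h | h⟩ <;> subst h <;>
      · refine ⟨2 * Fintype.card Γ, by positivity, ?_⟩
        rw [MonoidAlgebra.single_pow, MonoidAlgebra.one_def]
        norm_num [pow_mul, pow_card_eq_one]
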